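/- Let A be a separable Banach algebra. The following are equivalent: (a) the lattice Id(A) of closed two-sided ideals of A is countably-generated; (b) there is a countable subset B of A such that for every closed two-sided ideal I of A, I equals the closure of I ∩ B. -/
import Mathlib


open Topology

/-- **Beckhoff's lemma.** For a separable Banach algebra `A`, the lattice of closed
two-sided ideals of `A` is countably generated if and only if there is a countable
subset `B` of `A` such that every closed two-sided ideal `I` of `A` satisfies
`I = closure (I ∩ B)`. -/
theorem stmt_13 {A : Type*} [NormedRing A] [NormedAlgebra ℂ A] [CompleteSpace A]
    [TopologicalSpace.SeparableSpace A] :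
    (∃ S : Set (TwoSidedIdeal A), S.Countable ∧ (∀ J ∈ S, IsClosed (J : Set A)) ∧
      ∀ I : TwoSidedIdeal A, IsClosed (I : Set A) →
        (I : Set A) = closure (⋃ J ∈ {J ∈ S | (J : Set A) ⊆ (I : Set A)}, (J : Set A))) ↔
    (∃ B : Set A, B.Countable ∧ ∀ I : TwoSidedIdeal A, IsClosed (I : Set A) →
      (I : Set A) = closure ((I : Set A) ∩ B)) := by
  constructor
  · rintro ⟨S, hSc, _hScl, hS⟩
    choose D hDsub hDc hDcl using fun J : TwoSidedIdeal A =>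
      (TopologicalSpace.IsSeparable.of_separableSpace
        (J : Set A)).exists_countable_dense_subset
    refine ⟨⋃ J ∈ S, D J, hSc.biUnion (fun J _ => hDc J), fun I hI => ?_⟩
    refine subset_antisymm ?_ ?_
    · have h1 : (⋃ J ∈ {J ∈ S | (J : Set A) ⊆ (I : Set A)}, (J : Set A)) ⊆
          closure ((I : Set A) ∩ ⋃ J ∈ S, D J) := by
        rintro x hx
        simp only [Set.mem_iUnion, exists_prop] at hx
        obtain ⟨J, ⟨hJS, hJI⟩, hxJ⟩ := hx
        have h2 : (J : Set A) ⊆ closure ((I : Set A) ∩ ⋃ J ∈ S, D J) :=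
          (hDcl J).trans (closure_mono (fun y hy =>
            ⟨hJI (hDsub J hy), Set.mem_biUnion hJS hy⟩))
        exact h2 hxJ
      calc (I : Set A)
          = closure (⋃ J ∈ {J ∈ S | (J : Set A) ⊆ (I : Set A)}, (J : Set A)) := hS I hI
        _ ⊆ closure ((I : Set A) ∩ ⋃ J ∈ S, D J) := closure_minimal h1 isClosed_closure
    · exact (closure_mono Set.inter_subset_left).trans hI.closure_eq.subset
  · rintro ⟨B, hBc, hB⟩
    set Jb : A → TwoSidedIdeal A :=
      fun b => sInf {I : TwoSidedIdeal A | IsClosed (I : Set A) ∧ b ∈ I} with hJb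
    have hJbcl : ∀ b, IsClosed (Jb b : Set A) := by
      intro b
      have h : (Jb b : Set A) =
          ⋂ I ∈ {I : TwoSidedIdeal A | IsClosed (I : Set A) ∧ b ∈ I}, (I : Set A) := by
        ext x
        simp [hJb, TwoSidedIdeal.mem_sInf, SetLike.mem_coe]
      rw [h]
      exact isClosed_biInter fun I hI => hI.1
    refine ⟨Jb '' B, hBc.image _, ?_, fun I hI => ?_⟩
    · rintro _ ⟨b, _, rfl⟩; exact hJbcl b
    refine subset_antisymm ?_ ?_
    · have h1 : (I : Set A) ∩ B ⊆
          ⋃ J ∈ {J ∈ Jb '' B | (J : Set A) ⊆ (I : Set A)}, (J : Set A) := by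
        rintro b ⟨hbI, hbB⟩
        have hmem : b ∈ Jb b := (TwoSidedIdeal.mem_sInf A).2 fun I hI => hI.2
        have hsub : (Jb b : Set A) ⊆ (I : Set A) := fun x hx =>
          ((TwoSidedIdeal.mem_sInf A).1 hx) I ⟨hI, hbI⟩
        exact Set.mem_biUnion ⟨Set.mem_image_of_mem _ hbB, hsub⟩ hmem
      calc (I : Set A) = closure ((I : Set A) ∩ B) := hB I hI
        _ ⊆ closure (⋃ J ∈ {J ∈ Jb '' B | (J : Set A) ⊆ (I : Set A)}, (J : Set A)) :=
            closure_mono h1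
    · refine closure_minimal ?_ hI
      rintro x hx
      simp only [Set.mem_iUnion, exists_prop] at hx
      obtain ⟨J, ⟨_, hJI⟩, hxJ⟩ := hx
      exact hJI hxJ
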